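/- For the classical Liénard system ẋ = y − F(x), ẏ = −x, with F a real polynomial, and for any n ∈ ℕ, there exists a unique polynomial B_n(x,y) = Σ_{i=0}^{n} B_i(x) yⁱ with B_n(0,y) = yⁿ (i.e., B_n(0) = 1 and B_i(0) = 0 for i < n) such that the derivative of B_n along the flow, ∂B_n/∂x · (y − F(x)) − x ∂B_n/∂y, is a polynomial in x alone (independent of y). -/

import Mathlib

open Polynomial Finset

noncomputable def integ (p : Polynomial ℝ) : Polynomial ℝ :=
  ∑ k ∈ Finset.range (p.natDegree + 1), Polynomial.C (p.coeff k / (k + 1)) * Polynomial.X ^ (k + 1)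

lemma integ_eval_zero (p : Polynomial ℝ) : (integ p).eval 0 = 0 := by
  simp [integ, Polynomial.eval_finset_sum]

lemma derivative_integ (p : Polynomial ℝ) : (integ p).derivative = p := by
  rw [integ, derivative_sum]
  have h : ∀ k ∈ Finset.range (p.natDegree + 1),
      derivative (Polynomial.C (p.coeff k / (k + 1)) * Polynomial.X ^ (k + 1))
        = Polynomial.C (p.coeff k) * Polynomial.X ^ k := by
    intro k _
    rw [derivative_C_mul, derivative_X_pow, Nat.add_sub_cancel, ← mul_assoc, ← C_mul]
    congr 2
    have hk : ((k : ℝ) + 1) ≠ 0 := by positivity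
    push_cast
    field_simp
  rw [Finset.sum_congr rfl h]
  conv_rhs => rw [p.as_sum_range' (p.natDegree + 1) (Nat.lt_succ_self _)]
  simp [C_mul_X_pow_eq_monomial]

lemma antideriv_unique {p q : Polynomial ℝ} (h : p.derivative = q.derivative)
    (h0 : p.eval 0 = q.eval 0) : p = q := by
  have hd : (p - q).derivative = 0 := by rw [derivative_sub, h, sub_self]
  have hc := eq_C_of_derivative_eq_zero hd
  have h00 : (p - q).eval 0 = 0 := by simp [h0]
  rw [hc, eval_C] at h00
  have : p - q = 0 := by rw [hc, h00, map_zero]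
  exact sub_eq_zero.mp this

lemma coeff_extract {m : ℕ} (a : ℕ → Polynomial ℝ)
    (h : ∀ x y : ℝ, ∑ k ∈ Finset.range m, (a k).eval x * y ^ k = 0) :
    ∀ k < m, a k = 0 := by
  intro k hk
  apply Polynomial.funext
  intro x
  rw [Polynomial.eval_zero]
  have hp : (∑ j ∈ Finset.range m, Polynomial.C ((a j).eval x) * Polynomial.X ^ j : Polynomial ℝ) = 0 := by
    apply Polynomial.funext
    intro y
    rw [Polynomial.eval_finset_sum]
    simpa using h x y
  have hco := congrArg (fun p : Polynomial ℝ => p.coeff k) hp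
  simpa [Polynomial.finset_sum_coeff, Polynomial.coeff_C_mul, Polynomial.coeff_X_pow,
    Finset.mem_range.mpr hk] using hco

noncomputable def dd (F : Polynomial ℝ) (n : ℕ) : ℕ → Polynomial ℝ
  | 0 => 1
  | 1 => 0
  | (j+2) => integ (F * (dd F n (j+1)).derivative
      + ((n - j : ℕ) : Polynomial ℝ) * Polynomial.X * dd F n j)

lemma dd_eval_zero (F : Polynomial ℝ) (n : ℕ) : ∀ j, 1 ≤ j → (dd F n j).eval 0 = 0
  | 1, _ => by simp [dd]
  | (j+2), _ => by rw [dd]; exact integ_eval_zero _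

noncomputable def cc (F R : Polynomial ℝ) (b : ℕ → Polynomial ℝ) : ℕ → Polynomial ℝ
  | 0 => -(F * (b 0).derivative) - Polynomial.X * b 1 - R
  | (k+1) => (b k).derivative - F * (b (k+1)).derivative
      - ((k + 2 : ℕ) : Polynomial ℝ) * Polynomial.X * b (k+2)

lemma key_identity (F R : Polynomial ℝ) (n : ℕ) (b : ℕ → Polynomial ℝ)
    (hb : ∀ i, n + 1 ≤ i → b i = 0) (x y : ℝ) :
    (∑ i ∈ Finset.range (n+1), (b i).derivative.eval x * y ^ i) * (y - F.eval x)
      - x * (∑ i ∈ Finset.range (n+1), (i : ℝ) * (b i).eval x * y ^ (i - 1)) - R.eval x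
    = ∑ k ∈ Finset.range (n+2), (cc F R b k).eval x * y ^ k := by
  have hb1 : b (n+1) = 0 := hb _ le_rfl
  have hb2 : b (n+2) = 0 := hb _ (by omega)
  have hA : (∑ i ∈ Finset.range (n+1), (b i).derivative.eval x * y ^ i) * y
      = ∑ i ∈ Finset.range (n+1), (b i).derivative.eval x * y ^ (i+1) := by
    rw [Finset.sum_mul]
    exact Finset.sum_congr rfl fun i _ => by ring
  have hB : F.eval x * (∑ i ∈ Finset.range (n+1), (b i).derivative.eval x * y ^ i)
      = F.eval x * (b 0).derivative.eval x
        + ∑ i ∈ Finset.range (n+1), F.eval x * (b (i+1)).derivative.eval x * y ^ (i+1) := by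
    have e1 : (∑ i ∈ Finset.range (n+1), (b i).derivative.eval x * y ^ i)
        = (b 0).derivative.eval x
          + ∑ i ∈ Finset.range (n+1), (b (i+1)).derivative.eval x * y ^ (i+1) := by
      rw [Finset.sum_range_succ' (fun i => (b i).derivative.eval x * y ^ i),
        Finset.sum_range_succ (fun i => (b (i+1)).derivative.eval x * y ^ (i+1)) n, hb1]
      simp
      ring
    rw [e1, mul_add, Finset.mul_sum]
    congr 1
    exact Finset.sum_congr rfl fun i _ => by ring
  have hC : x * (∑ i ∈ Finset.range (n+1), (i : ℝ) * (b i).eval x * y ^ (i - 1))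
      = x * (b 1).eval x
        + ∑ i ∈ Finset.range (n+1), ((i : ℝ) + 2) * x * (b (i+2)).eval x * y ^ (i+1) := by
    have e1 : (∑ i ∈ Finset.range (n+1), (i : ℝ) * (b i).eval x * y ^ (i - 1))
        = ∑ i ∈ Finset.range (n+2), ((i : ℝ) + 1) * (b (i+1)).eval x * y ^ i := by
      rw [Finset.sum_range_succ' (fun i => (i : ℝ) * (b i).eval x * y ^ (i - 1))]
      rw [Finset.sum_range_succ (fun i => ((i : ℝ) + 1) * (b (i+1)).eval x * y ^ i) (n+1),
        Finset.sum_range_succ (fun i => ((i : ℝ) + 1) * (b (i+1)).eval x * y ^ i) n, hb1, hb2]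
      simp
    have e2 : (∑ i ∈ Finset.range (n+2), ((i : ℝ) + 1) * (b (i+1)).eval x * y ^ i)
        = (b 1).eval x
          + ∑ i ∈ Finset.range (n+1), ((i : ℝ) + 2) * (b (i+2)).eval x * y ^ (i+1) := by
      rw [Finset.sum_range_succ' (fun i => ((i : ℝ) + 1) * (b (i+1)).eval x * y ^ i)]
      simp
      rw [add_comm]
      congr 1
      exact Finset.sum_congr rfl fun i _ => by ring
    rw [e1, e2, mul_add, Finset.mul_sum]
    congr 1
    exact Finset.sum_congr rfl fun i _ => by ring
  calc (∑ i ∈ Finset.range (n+1), (b i).derivative.eval x * y ^ i) * (y - F.eval x)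
      - x * (∑ i ∈ Finset.range (n+1), (i : ℝ) * (b i).eval x * y ^ (i - 1)) - R.eval x
      = (∑ i ∈ Finset.range (n+1), (b i).derivative.eval x * y ^ i) * y
        - F.eval x * (∑ i ∈ Finset.range (n+1), (b i).derivative.eval x * y ^ i)
        - x * (∑ i ∈ Finset.range (n+1), (i : ℝ) * (b i).eval x * y ^ (i - 1)) - R.eval x := by
        ring
    _ = (∑ i ∈ Finset.range (n+1), (b i).derivative.eval x * y ^ (i+1))
        - (F.eval x * (b 0).derivative.eval x
          + ∑ i ∈ Finset.range (n+1), F.eval x * (b (i+1)).derivative.eval x * y ^ (i+1))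
        - (x * (b 1).eval x
          + ∑ i ∈ Finset.range (n+1), ((i : ℝ) + 2) * x * (b (i+2)).eval x * y ^ (i+1))
        - R.eval x := by rw [hA, hB, hC]
    _ = (∑ i ∈ Finset.range (n+1), ((b i).derivative.eval x * y ^ (i+1)
          - F.eval x * (b (i+1)).derivative.eval x * y ^ (i+1)
          - ((i : ℝ) + 2) * x * (b (i+2)).eval x * y ^ (i+1)))
        + (-(F.eval x * (b 0).derivative.eval x) - x * (b 1).eval x - R.eval x) := by
        rw [Finset.sum_sub_distrib, Finset.sum_sub_distrib]
        ring
    _ = ∑ k ∈ Finset.range (n+2), (cc F R b k).eval x * y ^ k := by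
        rw [Finset.sum_range_succ' (fun k => (cc F R b k).eval x * y ^ k)]
        congr 1
        · exact Finset.sum_congr rfl fun i _ => by
            simp [cc]
            ring
        · simp [cc]

lemma cond_iff (F R : Polynomial ℝ) (n : ℕ) (b : ℕ → Polynomial ℝ)
    (hb : ∀ i, n + 1 ≤ i → b i = 0) :
    (∀ x y : ℝ, (∑ i ∈ Finset.range (n+1), (b i).derivative.eval x * y ^ i) * (y - F.eval x)
      - x * (∑ i ∈ Finset.range (n+1), (i : ℝ) * (b i).eval x * y ^ (i - 1)) = R.eval x)
    ↔ (∀ k < n + 2, cc F R b k = 0) := by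
  constructor
  · intro h
    apply coeff_extract
    intro x y
    rw [← key_identity F R n b hb x y, h x y]
    ring
  · intro h x y
    have hk := key_identity F R n b hb x y
    have hz : ∑ k ∈ Finset.range (n+2), (cc F R b k).eval x * y ^ k = 0 :=
      Finset.sum_eq_zero fun k hkk => by
        rw [h k (Finset.mem_range.mp hkk), Polynomial.eval_zero, zero_mul]
    rw [hz] at hk
    linarith

lemma sum_conv1 (n : ℕ) (B : Fin (n+1) → Polynomial ℝ) (b : ℕ → Polynomial ℝ)
    (hB : ∀ i : Fin (n+1), b i.val = B i) (x y : ℝ) :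
    ∑ i : Fin (n+1), (B i).derivative.eval x * y ^ (i : ℕ)
      = ∑ i ∈ Finset.range (n+1), (b i).derivative.eval x * y ^ i := by
  rw [← Fin.sum_univ_eq_sum_range (fun m => (b m).derivative.eval x * y ^ m) (n+1)]
  exact Finset.sum_congr rfl fun i _ => by rw [hB i]

lemma sum_conv2 (n : ℕ) (B : Fin (n+1) → Polynomial ℝ) (b : ℕ → Polynomial ℝ)
    (hB : ∀ i : Fin (n+1), b i.val = B i) (x y : ℝ) :
    ∑ i : Fin (n+1), ((i : ℕ) : ℝ) * (B i).eval x * y ^ ((i : ℕ) - 1)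
      = ∑ i ∈ Finset.range (n+1), (i : ℝ) * (b i).eval x * y ^ (i - 1) := by
  rw [← Fin.sum_univ_eq_sum_range (fun m => (m : ℝ) * (b m).eval x * y ^ (m - 1)) (n+1)]
  exact Finset.sum_congr rfl fun i _ => by rw [hB i]

theorem stmt_7 (F : Polynomial ℝ) (n : ℕ) :
    ∃! B : Fin (n + 1) → Polynomial ℝ,
      (B ⟨n, Nat.lt_succ_self n⟩).eval 0 = 1 ∧
      (∀ i : Fin (n + 1), (i : ℕ) < n → (B i).eval 0 = 0) ∧
      ∃ R : Polynomial ℝ, ∀ x y : ℝ,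
        (∑ i : Fin (n + 1), (B i).derivative.eval x * y ^ (i : ℕ)) * (y - F.eval x) -
          x * (∑ i : Fin (n + 1), (i : ℕ) * (B i).eval x * y ^ ((i : ℕ) - 1)) =
        R.eval x := by
  classical
  set bw : ℕ → Polynomial ℝ := fun i => if i ≤ n then dd F n (n - i) else 0 with hbwdef
  set Bw : Fin (n+1) → Polynomial ℝ := fun i => bw i.val with hBwdef
  set Rw : Polynomial ℝ := -(F * (bw 0).derivative) - Polynomial.X * bw 1 with hRwdef
  have hbwz : ∀ i, n + 1 ≤ i → bw i = 0 := fun i hi => if_neg (by omega)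
  have hbweq : ∀ i, i ≤ n → bw i = dd F n (n - i) := fun i hi => if_pos hi
  have hbwn : bw n = 1 := by rw [hbweq n le_rfl, Nat.sub_self]; rfl
  have hccw : ∀ k < n + 2, cc F Rw bw k = 0 := by
    intro k _
    match k with
    | 0 =>
      show -(F * (bw 0).derivative) - Polynomial.X * bw 1 - Rw = 0
      rw [hRwdef]; ring
    | (k+1) =>
      show (bw k).derivative - F * (bw (k+1)).derivative
          - ((k + 2 : ℕ) : Polynomial ℝ) * Polynomial.X * bw (k+2) = 0
      by_cases h1 : n ≤ k
      · have hdk : (bw k).derivative = 0 := by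
          rcases eq_or_lt_of_le h1 with h | h
          · rw [← h, hbwn]; exact derivative_one
          · rw [hbwz k (by omega)]; exact derivative_zero
        rw [hdk, hbwz (k+1) (by omega), hbwz (k+2) (by omega)]
        simp
      · by_cases h2 : k + 1 = n
        · have hk1 : bw k = dd F n 1 := by
            rw [hbweq k (by omega)]; congr 1; omega
          have hk2 : bw (k+1) = 1 := by rw [h2, hbwn]
          rw [hk1, hk2, hbwz (k+2) (by omega)]
          show (0 : Polynomial ℝ).derivative - F * (1 : Polynomial ℝ).derivative - _ = 0
          simp
        · -- k + 2 ≤ n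
          have hkn : k + 2 ≤ n := by omega
          set j := n - k - 2 with hjdef
          have e0 : n - k = j + 2 := by omega
          have e1 : n - (k+1) = j + 1 := by omega
          have e2 : n - (k+2) = j := by omega
          have e3 : n - j = k + 2 := by omega
          have hk0 : bw k = dd F n (j+2) := by rw [hbweq k (by omega), e0]
          have hk1 : bw (k+1) = dd F n (j+1) := by rw [hbweq (k+1) (by omega), e1]
          have hk2 : bw (k+2) = dd F n j := by rw [hbweq (k+2) (by omega), e2]
          have hd : (dd F n (j+2)).derivative
              = F * (dd F n (j+1)).derivative
                + ((k + 2 : ℕ) : Polynomial ℝ) * Polynomial.X * dd F n j := by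
            rw [dd, derivative_integ, e3]
          rw [hk0, hk1, hk2, hd]
          ring
  have hBwv : ∀ i : Fin (n+1), bw i.val = Bw i := fun i => rfl
  refine ⟨Bw, ⟨?_, ?_, ?_⟩, ?_⟩
  · show (bw n).eval 0 = 1
    rw [hbwn]; simp
  · intro i hi
    show (bw i.val).eval 0 = 0
    rw [hbweq i.val (by omega)]
    exact dd_eval_zero F n _ (by omega)
  · exact ⟨Rw, fun x y => by
      rw [sum_conv1 n Bw bw hBwv, sum_conv2 n Bw bw hBwv]
      exact (cond_iff F Rw n bw hbwz).mpr hccw x y⟩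
  · rintro B' ⟨hB1, hB2, R', hR'⟩
    set b' : ℕ → Polynomial ℝ := fun m => if h : m < n + 1 then B' ⟨m, h⟩ else 0 with hb'def
    have hB'v : ∀ i : Fin (n+1), b' i.val = B' i := fun i => by
      show dite _ _ _ = _
      rw [dif_pos i.isLt]
    have hb'z : ∀ i, n + 1 ≤ i → b' i = 0 := fun i hi => dif_neg (by omega)
    have hb'eq : ∀ i (h : i < n + 1), b' i = B' ⟨i, h⟩ := fun i h => dif_pos h
    have hcc : ∀ k < n + 2, cc F R' b' k = 0 := by
      apply (cond_iff F R' n b' hb'z).mp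
      intro x y
      rw [← sum_conv1 n B' b' hB'v, ← sum_conv2 n B' b' hB'v]
      exact hR' x y
    have hb'n0 : (b' n).eval 0 = 1 := by rw [hb'eq n (Nat.lt_succ_self n)]; exact hB1
    have hb'lt : ∀ i, i < n → (b' i).eval 0 = 0 := fun i hi => by
      rw [hb'eq i (by omega)]; exact hB2 ⟨i, by omega⟩ hi
    have claim : ∀ j, j ≤ n → b' (n - j) = dd F n j := by
      intro j
      induction j using Nat.strong_induction_on with
      | _ j IH =>
        match j, IH with
        | 0, _ =>
          intro _
          have h := hcc (n+1) (by omega)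
          rw [show cc F R' b' (n+1) = (b' n).derivative - F * (b' (n+1)).derivative
              - ((n + 2 : ℕ) : Polynomial ℝ) * Polynomial.X * b' (n+2) from rfl,
            hb'z (n+1) le_rfl, hb'z (n+2) (by omega)] at h
          simp [-Polynomial.derivative_eq_zero] at h
          rw [Nat.sub_zero]
          refine antideriv_unique ?_ ?_
          · rw [h]; show (0 : Polynomial ℝ) = (dd F n 0).derivative; simp [dd]
          · rw [hb'n0]; simp [dd]
        | 1, IH =>
          intro h1n
          have hbn : b' n = 1 := by
            have := IH 0 (by omega) (by omega)
            rwa [Nat.sub_zero] at this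
            
          have h := hcc n (by omega)
          have hn : n = (n - 1) + 1 := by omega
          rw [hn, show cc F R' b' ((n-1)+1) = (b' (n-1)).derivative
              - F * (b' ((n-1)+1)).derivative
              - (((n-1) + 2 : ℕ) : Polynomial ℝ) * Polynomial.X * b' ((n-1)+2) from rfl,
            ← hn, show n - 1 + 2 = n + 1 by omega, hbn, hb'z (n+1) le_rfl] at h
          simp [-Polynomial.derivative_eq_zero] at h
          refine antideriv_unique ?_ ?_
          · rw [h]; show (0 : Polynomial ℝ) = (dd F n 1).derivative; simp [dd]
          · rw [hb'lt (n-1) (by omega)]; simp [dd]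
        | (j+2), IH =>
          intro hjn
          have hi1 : b' (n - (j+1)) = dd F n (j+1) := IH (j+1) (by omega) (by omega)
          have hi0 : b' (n - j) = dd F n j := IH j (by omega) (by omega)
          set i := n - (j + 2) with hidef
          have e1 : i + 1 = n - (j+1) := by omega
          have e2 : i + 2 = n - j := by omega
          have e3 : i + 2 = n - j := by omega
          have h := hcc (i+1) (by omega)
          rw [show cc F R' b' (i+1) = (b' i).derivative - F * (b' (i+1)).derivative
              - ((i + 2 : ℕ) : Polynomial ℝ) * Polynomial.X * b' (i+2) from rfl,
            e1, e2, hi1, hi0] at h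
          have hd : (b' i).derivative = (dd F n (j+2)).derivative := by
            rw [dd, derivative_integ]
            linear_combination h
          refine antideriv_unique hd ?_
          · rw [hb'lt i (by omega)]
            rw [dd]
            exact (integ_eval_zero _).symm
    funext i
    have h1 : b' i.val = dd F n (n - i.val) := by
      have := claim (n - i.val) (by omega)
      rwa [show n - (n - i.val) = i.val by omega] at this
    rw [← hB'v i, h1]
    show _ = bw i.val
    rw [hbweq i.val (by omega)]
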